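/- Let (X,τ) be a compatible decoration that is NOT a generalized Satake diagram, witnessed by i ∈ I\X with τ(i) = i and j ∈ X such that {i,j} is a connected component of X[i] of type A₂ (a_{ij} = a_{ji} = −1, both orthogonal to the rest of X). Then s̃_i := w_X · w_{X[i]} acts on the span of α_i, α_j as s_i s_j, which has order 3, and s̃_i does not stabilize the fixed space V^σ (indeed s̃_i(α̅_i) = (α_j − α_i)/2 is not σ-fixed). -/

import Mathlib

open scoped BigOperators

namespace KMStmt

variable {I : Type}

/-- The simple root `α i`, as an element of the root lattice realized inside `I → ℚ`. -/
noncomputable def sr [DecidableEq I] (i : I) : I → ℚ := Pi.single i 1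

/-- `A` is a generalized Cartan matrix. -/
def IsGCM [Fintype I] (A : I → I → ℤ) : Prop :=
  (∀ i, A i i = 2) ∧ (∀ i j, i ≠ j → A i j ≤ 0) ∧ (∀ i j, A i j = 0 → A j i = 0)

/-- `s` realizes the simple reflections on the root lattice:
`s i v = v - ⟨v, αᵢ^∨⟩ αᵢ`, where `⟨α j, αᵢ^∨⟩ = A i j`. -/
def IsReflRep [Fintype I] [DecidableEq I] (A : I → I → ℤ)
    (s : I → ((I → ℚ) ≃ₗ[ℚ] (I → ℚ))) : Prop :=
  ∀ i v, s i v = v - (∑ j, v j * (A i j : ℚ)) • sr i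

/-- The Weyl group, as a subgroup of the linear automorphisms of the root space. -/
def Wgrp [Fintype I] [DecidableEq I] (s : I → ((I → ℚ) ≃ₗ[ℚ] (I → ℚ))) :
    Subgroup ((I → ℚ) ≃ₗ[ℚ] (I → ℚ)) := Subgroup.closure (Set.range s)

/-- The (standard) parabolic subgroup `W_X` generated by the reflections `s i`, `i ∈ X`. -/
def Wpara [Fintype I] [DecidableEq I] (s : I → ((I → ℚ) ≃ₗ[ℚ] (I → ℚ))) (X : Set I) :
    Subgroup ((I → ℚ) ≃ₗ[ℚ] (I → ℚ)) := Subgroup.closure (s '' X)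

/-- The nonnegative cone `Q⁺` of the root lattice. -/
def Qplus [Fintype I] : Set (I → ℚ) := {v | ∀ j, ∃ n : ℕ, v j = (n : ℚ)}

/-- The projection `λ ↦ λ̄ = (λ + σ(λ))/2` onto the `σ`-fixed subspace. -/
noncomputable def bar [Fintype I] (σ : (I → ℚ) → (I → ℚ)) (v : I → ℚ) : I → ℚ :=
  (2⁻¹ : ℚ) • (v + σ v)

/-- `σ = w_X ∘ τ` as a map on the root space. -/
def σmap [Fintype I] (wX tV : (I → ℚ) ≃ₗ[ℚ] (I → ℚ)) : (I → ℚ) → (I → ℚ) :=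
  fun v => wX (tV v)

/-- `(X, τ)` is a compatible decoration, with `tV` the action of `τ` on the root space and
`wX` the longest element of the (finite) parabolic subgroup `W_X`:
`τ` is an involutive diagram automorphism of `A` stabilizing `X`, `X` is of finite type,
and `τ|_X` is the opposition involution of `X` (i.e. `w_X (α i) = -α (τ i)` for `i ∈ X`). -/
def IsCompatibleDec [Fintype I] [DecidableEq I] (A : I → I → ℤ)
    (s : I → ((I → ℚ) ≃ₗ[ℚ] (I → ℚ))) (X : Set I) (τ : Equiv.Perm I)
    (tV wX : (I → ℚ) ≃ₗ[ℚ] (I → ℚ)) : Prop :=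
  (∀ i j, A (τ i) (τ j) = A i j) ∧ (∀ i, τ (τ i) = i) ∧ (∀ i ∈ X, τ i ∈ X) ∧
  (∀ i, tV (sr i) = sr (τ i)) ∧
  Finite (Wpara s X) ∧ wX ∈ Wpara s X ∧ wX * wX = 1 ∧
  (∀ i ∈ X, wX (sr i) = - sr (τ i))

/-- `(X, τ)` is a generalized Satake diagram: (it is a compatible decoration and) there is no
`i ∈ I \ X` with `τ i = i` whose connected component in `X ∪ {i}` is of type `A₂`. -/
def IsGSat [Fintype I] (A : I → I → ℤ) (X : Set I) (τ : Equiv.Perm I) : Prop :=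
  ¬ ∃ i, i ∉ X ∧ τ i = i ∧ ∃ j ∈ X, A i j = -1 ∧ A j i = -1 ∧
      ∀ k ∈ X, k ≠ j → A i k = 0 ∧ A j k = 0

/-- `B` is the invariant symmetric bilinear form, with symmetrizers `ε`. -/
def IsInvForm [Fintype I] [DecidableEq I] (A : I → I → ℤ) (ε : I → ℚ)
    (B : (I → ℚ) →ₗ[ℚ] (I → ℚ) →ₗ[ℚ] ℚ)
    (s : I → ((I → ℚ) ≃ₗ[ℚ] (I → ℚ))) : Prop :=
  (∀ i, 0 < ε i) ∧ (∀ u v, B u v = B v u) ∧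
  (∀ i j, B (sr i) (sr j) = ε i * (A i j : ℚ)) ∧
  (∀ i u v, B (s i u) (s i v) = B u v)

/-- `Φ` is the root system: it contains the simple roots, is stable under the simple
reflections and under negation, does not contain `0`, and every root is positive or
negative. -/
def IsRootSystem [Fintype I] [DecidableEq I]
    (s : I → ((I → ℚ) ≃ₗ[ℚ] (I → ℚ))) (Φ : Set (I → ℚ)) : Prop :=
  (∀ i, sr i ∈ Φ) ∧ (0 ∉ Φ) ∧ (∀ v ∈ Φ, v ∈ (Qplus : Set (I → ℚ)) ∨ -v ∈ (Qplus : Set (I → ℚ))) ∧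
  (∀ i, ∀ v ∈ Φ, s i v ∈ Φ) ∧ (∀ v ∈ Φ, -v ∈ Φ)

/-- The orthogonal reflection `s_β : v ↦ v - 2 (β, v)/(β, β) β`, as an endomorphism. -/
noncomputable def reflMap [Fintype I] (B : (I → ℚ) →ₗ[ℚ] (I → ℚ) →ₗ[ℚ] ℚ)
    (β : I → ℚ) : Module.End ℚ (I → ℚ) :=
  LinearMap.id - (B β).smulRight ((2 / B β β) • β)

/-- `Istar` is a set of representatives of the `τ`-orbits on `I \ X`. -/
def IsOrbitReps [Fintype I] [DecidableEq I] (X : Finset I) (τ : Equiv.Perm I)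
    (Istar : Finset I) : Prop :=
  (∀ i ∈ Istar, i ∉ X) ∧ (∀ i, i ∉ X → i ∈ Istar ∨ τ i ∈ Istar) ∧
  (∀ i ∈ Istar, τ i ∈ Istar → τ i = i)

/-- The restricted root system `Φ̄ = { λ̄ : λ ∈ Φ } \ {0}`. -/
noncomputable def restRoots [Fintype I] (σ : (I → ℚ) → (I → ℚ)) (Φ : Set (I → ℚ)) :
    Set (I → ℚ) := {u | u ≠ 0 ∧ ∃ l ∈ Φ, u = bar σ l}


def mmul (p q : (ℤ × ℤ) × (ℤ × ℤ)) : (ℤ × ℤ) × (ℤ × ℤ) :=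
  ((q.1.1 * p.1.1 + q.1.2 * p.2.1, q.1.1 * p.1.2 + q.1.2 * p.2.2),
   (q.2.1 * p.1.1 + q.2.2 * p.2.1, q.2.1 * p.1.2 + q.2.2 * p.2.2))

def M6 : List ((ℤ × ℤ) × (ℤ × ℤ)) :=
  [((1, 0), (0, 1)), ((-1, 0), (1, 1)), ((1, 1), (0, -1)),
   ((0, 1), (-1, -1)), ((-1, -1), (1, 0)), ((0, -1), (-1, 0))]

lemma M6_mul : ∀ p ∈ M6, ∀ q ∈ M6, mmul p q ∈ M6 := by decide
lemma M6_inv : ∀ p ∈ M6, ∃ q ∈ M6, mmul p q = ((1, 0), (0, 1)) := by decide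
lemma M6_neg : ∀ p ∈ M6, p.1.1 ≤ 0 → p.1.2 ≤ 0 → p.2.1 ≤ 0 → p.2.2 ≤ 0 →
    p = ((0, -1), (-1, 0)) := by decide
lemma M6_row2 : ∀ p ∈ M6, p.2.1 = 0 → p.2.2 = -1 → p = ((1, 1), (0, -1)) := by decide

/-- Let `(X, τ)` be a compatible decoration which is NOT a generalized Satake diagram,
witnessed by `i ∈ I \ X` with `τ i = i` and `j ∈ X` such that `{i, j}` is a connected
component of `X[i] = X ∪ {i}` of type `A₂`.  Then `s̃ᵢ := w_X ⬝ w_{X[i]}` acts on the span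
of `αᵢ, αⱼ` as `sᵢ sⱼ`, which has order 3, and `s̃ᵢ` does not stabilize `V^σ`: indeed
`s̃ᵢ (ᾱᵢ) = (αⱼ − αᵢ)/2` is not `σ`-fixed. -/
theorem not_gsatake_witness {I : Type} [Fintype I] [DecidableEq I]
    (A : I → I → ℤ) (hA : IsGCM A)
    (s : I → ((I → ℚ) ≃ₗ[ℚ] (I → ℚ))) (hs : IsReflRep A s)
    (X : Set I) (τ : Equiv.Perm I) (tV wX : (I → ℚ) ≃ₗ[ℚ] (I → ℚ))
    (hcd : IsCompatibleDec A s X τ tV wX)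
    (i j : I) (hi : i ∉ X) (hτi : τ i = i) (hj : j ∈ X)
    (hij : A i j = -1) (hji : A j i = -1)
    (hcomp : ∀ k ∈ X, k ≠ j → A i k = 0 ∧ A j k = 0)
    (wXi : (I → ℚ) ≃ₗ[ℚ] (I → ℚ))
    (hwXimem : wXi ∈ Wpara s (X ∪ {i}))
    (hwXilong : ∀ j' ∈ X ∪ {i}, ∀ k, wXi (sr j') k ≤ 0) :
    -- s̃ᵢ acts on span{αᵢ, αⱼ} as sᵢ sⱼ :
    (wX * wXi) (sr i) = s i (s j (sr i)) ∧
    (wX * wXi) (sr j) = s i (s j (sr j)) ∧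
    -- sᵢ sⱼ has order 3 :
    orderOf (s i * s j) = 3 ∧
    -- s̃ᵢ (ᾱᵢ) = (αⱼ − αᵢ)/2, which is not σ-fixed :
    (wX * wXi) (bar (σmap wX tV) (sr i)) = (2⁻¹ : ℚ) • (sr j - sr i) ∧
    σmap wX tV ((2⁻¹ : ℚ) • (sr j - sr i)) ≠ (2⁻¹ : ℚ) • (sr j - sr i) := by
  obtain ⟨hA2, hAle, hA0⟩ := hA
  obtain ⟨hAτ, hτinv, hτX, htV, _, hwXmem, hwXsq, hwXneg⟩ := hcd
  have hij' : i ≠ j := fun h => hi (h ▸ hj)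
  have hji' : j ≠ i := hij'.symm
  have hτj : τ j = j := by
    by_contra hne
    have h0 : A i (τ j) = 0 := (hcomp (τ j) (hτX j hj) hne).1
    have h1 : A (τ i) (τ j) = A i j := hAτ i j
    rw [hτi, h0, hij] at h1
    exact absurd h1 (by norm_num)
  have hs' : ∀ l v, s l v = v - (∑ k, v k * (A l k : ℚ)) • sr l := hs
  have sumlem : ∀ l m : I, (∑ k, sr m k * (A l k : ℚ)) = (A l m : ℚ) := by
    intro l m
    rw [Finset.sum_eq_single m]
    · simp [sr]
    · intro k _ hk; simp [sr, Pi.single_eq_of_ne hk]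
    · simp
  have srefl : ∀ l m : I, s l (sr m) = sr m - (A l m : ℚ) • sr l := by
    intro l m; rw [hs, sumlem]
  have sumsub : ∀ (l m : I) (v : I → ℚ) (c : ℚ),
      (∑ k, (v - c • sr m) k * (A l k : ℚ))
        = (∑ k, v k * (A l k : ℚ)) - c * (A l m : ℚ) := by
    intro l m v c
    have h : ∀ k, (v - c • sr m) k * (A l k : ℚ)
        = v k * (A l k : ℚ) - c * (sr m k * (A l k : ℚ)) := by
      intro k; simp only [Pi.sub_apply, Pi.smul_apply, smul_eq_mul]; ring
    simp only [h]
    rw [Finset.sum_sub_distrib, ← Finset.mul_sum, sumlem]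
  have cii : ((A i i : ℤ) : ℚ) = 2 := by rw [hA2]; norm_num
  have cjj : ((A j j : ℤ) : ℚ) = 2 := by rw [hA2]; norm_num
  have cij : ((A i j : ℤ) : ℚ) = -1 := by rw [hij]; norm_num
  have cji : ((A j i : ℤ) : ℚ) = -1 := by rw [hji]; norm_num
  have mulapp : ∀ (f g : (I → ℚ) ≃ₗ[ℚ] (I → ℚ)) (v : I → ℚ), (f * g) v = f (g v) :=
    fun _ _ _ => rfl
  have key : ∀ w ∈ Wpara s (X ∪ {i}), ∃ p ∈ M6,
      w (sr i) = (p.1.1 : ℚ) • sr i + (p.1.2 : ℚ) • sr j ∧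
      w (sr j) = (p.2.1 : ℚ) • sr i + (p.2.2 : ℚ) • sr j := by
    intro w hw
    induction hw using Subgroup.closure_induction with
    | mem x hx =>
      obtain ⟨k, hk, rfl⟩ := hx
      by_cases hki : k = i
      · subst hki
        refine ⟨((-1, 0), (1, 1)), by simp [M6], ?_, ?_⟩
        · rw [srefl, cii]; push_cast; module
        · rw [srefl, cij]; push_cast; module
      · by_cases hkj : k = j
        · subst hkj
          refine ⟨((1, 1), (0, -1)), by simp [M6], ?_, ?_⟩
          · rw [srefl, cji]; push_cast; module
          · rw [srefl, cjj]; push_cast; module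
        · have hkX : k ∈ X := by
            rcases hk with h | h
            · exact h
            · exact absurd (by simpa using h) hki
          obtain ⟨hik, hjk⟩ := hcomp k hkX hkj
          have hki0 : ((A k i : ℤ) : ℚ) = 0 := by rw [hA0 i k hik]; norm_num
          have hkj0 : ((A k j : ℤ) : ℚ) = 0 := by rw [hA0 j k hjk]; norm_num
          refine ⟨((1, 0), (0, 1)), by simp [M6], ?_, ?_⟩
          · rw [srefl, hki0]; push_cast; module
          · rw [srefl, hkj0]; push_cast; module
    | one =>
      refine ⟨((1, 0), (0, 1)), by simp [M6], ?_, ?_⟩ <;>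
        · show sr _ = _
          push_cast; module
    | mul x y hx hy ihx ihy =>
      obtain ⟨p, hp, hx1, hx2⟩ := ihx
      obtain ⟨q, hq, hy1, hy2⟩ := ihy
      refine ⟨mmul p q, M6_mul p hp q hq, ?_, ?_⟩
      · rw [mulapp, hy1, map_add, map_smul, map_smul, hx1, hx2]
        simp only [mmul]; push_cast; module
      · rw [mulapp, hy2, map_add, map_smul, map_smul, hx1, hx2]
        simp only [mmul]; push_cast; module
    | inv x hx ihx =>
      obtain ⟨p, hp, h1, h2⟩ := ihx
      obtain ⟨q, hq, hpq⟩ := M6_inv p hp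
      have e : ∀ a b : ℤ, x ((a : ℚ) • sr i + (b : ℚ) • sr j)
          = ((a * p.1.1 + b * p.2.1 : ℤ) : ℚ) • sr i
            + ((a * p.1.2 + b * p.2.2 : ℤ) : ℚ) • sr j := by
        intro a b
        rw [map_add, map_smul, map_smul, h1, h2]; push_cast; module
      have eq1 : x ((q.1.1 : ℚ) • sr i + (q.1.2 : ℚ) • sr j) = sr i := by
        rw [e]
        have h11 : q.1.1 * p.1.1 + q.1.2 * p.2.1 = 1 := by
          have := congrArg (fun r => r.1.1) hpq; simpa [mmul] using this
        have h12 : q.1.1 * p.1.2 + q.1.2 * p.2.2 = 0 := by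
          have := congrArg (fun r => r.1.2) hpq; simpa [mmul] using this
        rw [h11, h12]; push_cast; module
      have eq2 : x ((q.2.1 : ℚ) • sr i + (q.2.2 : ℚ) • sr j) = sr j := by
        rw [e]
        have h21 : q.2.1 * p.1.1 + q.2.2 * p.2.1 = 0 := by
          have := congrArg (fun r => r.2.1) hpq; simpa [mmul] using this
        have h22 : q.2.1 * p.1.2 + q.2.2 * p.2.2 = 1 := by
          have := congrArg (fun r => r.2.2) hpq; simpa [mmul] using this
        rw [h21, h22]; push_cast; module
      refine ⟨q, hq, ?_, ?_⟩
      · conv_lhs => rw [← eq1]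
        exact x.symm_apply_apply _
      · conv_lhs => rw [← eq2]
        exact x.symm_apply_apply _
  have evali : ∀ (a b : ℚ), (a • sr i + b • sr j) i = a := by
    intro a b; simp [sr, Pi.single_apply, hji']
  have evalj : ∀ (a b : ℚ), (a • sr i + b • sr j) j = b := by
    intro a b; simp [sr, Pi.single_apply, hij']
  obtain ⟨p, hp, hw1, hw2⟩ := key wXi hwXimem
  have memii : i ∈ X ∪ {i} := Set.mem_union_right _ rfl
  have h11 : (p.1.1 : ℚ) ≤ 0 := by
    have := hwXilong i memii i; rw [hw1, evali] at this; exact this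
  have h12 : (p.1.2 : ℚ) ≤ 0 := by
    have := hwXilong i memii j; rw [hw1, evalj] at this; exact this
  have h21 : (p.2.1 : ℚ) ≤ 0 := by
    have := hwXilong j (Set.mem_union_left _ hj) i; rw [hw2, evali] at this; exact this
  have h22 : (p.2.2 : ℚ) ≤ 0 := by
    have := hwXilong j (Set.mem_union_left _ hj) j; rw [hw2, evalj] at this; exact this
  have hpw : p = ((0, -1), (-1, 0)) :=
    M6_neg p hp (by exact_mod_cast h11) (by exact_mod_cast h12)
      (by exact_mod_cast h21) (by exact_mod_cast h22)
  subst hpw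
  have hwXi_i : wXi (sr i) = -sr j := by rw [hw1]; push_cast; module
  have hwXi_j : wXi (sr j) = -sr i := by rw [hw2]; push_cast; module
  have hwXmem' : wX ∈ Wpara s (X ∪ {i}) :=
    Subgroup.closure_mono (Set.image_mono Set.subset_union_left) hwXmem
  obtain ⟨r, hr, hx1, hx2⟩ := key wX hwXmem'
  have hwXj0 : wX (sr j) = -sr j := by rw [hwXneg j hj, hτj]
  have hcomb : (r.2.1 : ℚ) • sr i + (r.2.2 : ℚ) • sr j = -sr j := hx2.symm.trans hwXj0
  have r21 : (r.2.1 : ℚ) = 0 := by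
    have := congrFun hcomb i
    rw [evali] at this
    simpa [sr, Pi.single_apply, hji'] using this
  have r22 : (r.2.2 : ℚ) = -1 := by
    have := congrFun hcomb j
    rw [evalj] at this
    simpa [sr, Pi.single_apply] using this
  have hrw : r = ((1, 1), (0, -1)) :=
    M6_row2 r hr (by exact_mod_cast r21) (by exact_mod_cast r22)
  subst hrw
  have hwX_i : wX (sr i) = sr i + sr j := by rw [hx1]; push_cast; module
  have e1 : s j (sr i) = sr i + sr j := by rw [srefl, cji]; module
  have e2 : s j (sr j) = -sr j := by rw [srefl, cjj]; module
  have e3 : s i (sr i) = -sr i := by rw [srefl, cii]; module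
  have e4 : s i (sr j) = sr i + sr j := by rw [srefl, cij]; module
  have t1r : s i (s j (sr i)) = sr j := by rw [e1, map_add, e3, e4]; module
  have t2r : s i (s j (sr j)) = -(sr i + sr j) := by rw [e2, map_neg, e4]
  have htVi : tV (sr i) = sr i := by rw [htV, hτi]
  have htVj : tV (sr j) = sr j := by rw [htV, hτj]
  refine ⟨?_, ?_, ?_, ?_, ?_⟩
  · rw [mulapp, hwXi_i, map_neg, hwXj0, t1r]; module
  · rw [mulapp, hwXi_j, map_neg, hwX_i, t2r]
  · have cube : (s i * s j) ^ 3 = 1 := by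
      apply LinearEquiv.toLinearMap_injective
      apply LinearMap.ext
      intro v
      have hp3 : ((s i * s j) ^ 3) v = s i (s j (s i (s j (s i (s j v))))) := by
        rw [pow_succ, pow_succ, pow_one, mulapp, mulapp, mulapp, mulapp, mulapp]
      have h1v : (1 : (I → ℚ) ≃ₗ[ℚ] (I → ℚ)) v = v := rfl
      show ((s i * s j) ^ 3) v = (1 : (I → ℚ) ≃ₗ[ℚ] (I → ℚ)) v
      rw [hp3, h1v]
      simp only [hs', sumsub]
      simp only [cii, cjj, cij, cji]
      module
    have hne1 : (s i * s j) ≠ 1 := by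
      intro h
      have h2 : s i (s j (sr i)) = sr i := by rw [← mulapp, h]; rfl
      rw [t1r] at h2
      have := congrFun h2 i
      simp [sr, Pi.single_apply, hij', hji'] at this
    haveI : Fact (Nat.Prime 3) := ⟨by norm_num⟩
    exact orderOf_eq_prime cube hne1
  · have hbar : bar (σmap wX tV) (sr i) = (2⁻¹ : ℚ) • ((2 : ℚ) • sr i + sr j) := by
      simp only [bar, σmap, htVi, hwX_i]; module
    rw [mulapp, hbar]
    simp only [map_smul, map_add, map_neg, hwXi_i, hwXi_j, hwX_i, hwXj0]
    module
  · intro h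
    have hls : σmap wX tV ((2⁻¹ : ℚ) • (sr j - sr i))
        = (2⁻¹ : ℚ) • (-sr j - (sr i + sr j)) := by
      simp only [σmap, map_smul, map_sub, htVi, htVj, hwX_i, hwXj0]
    rw [hls] at h
    have := congrFun h j
    norm_num [sr, Pi.single_apply, hij', hji'] at this


end KMStmt
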